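/- Let n, m, p ≥ 1, let A ∈ ℝ^{n×n}, B ∈ ℝ^{n×m}, C ∈ ℝ^{p×n}, D ∈ ℝ^{p×m}, let γ > 0, and let P ∈ ℝ^{n×n} be symmetric positive definite. Assume the bounded-real LMI holds, i.e. the symmetric block matrix [[AᵀPA − P + CᵀC, AᵀPB + CᵀD],[BᵀPA + DᵀC, BᵀPB + DᵀD − γ²I]] is negative definite. Then for every input sequence u : ℕ → ℝ^m, the trajectory of the DT-LTI system satisfies, for every horizon T ∈ ℕ: ∑_{k=0}^{T−1} ‖z_k‖² + h_Tᵀ P h_T ≤ γ² ∑_{k=0}^{T−1} ‖u_k‖². -/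

import Mathlib

open Matrix

/-- Squared Euclidean norm of a vector in `ℝ^d`. -/
def sqNorm {d : ℕ} (v : Fin d → ℝ) : ℝ := ∑ i, v i ^ 2

/-- State trajectory of the DT-LTI system `h_{k+1} = A h_k + B u_k`, `h_0 = 0`. -/
noncomputable def ltiState {n m : ℕ} (A : Matrix (Fin n) (Fin n) ℝ)
    (B : Matrix (Fin n) (Fin m) ℝ) (u : ℕ → Fin m → ℝ) : ℕ → Fin n → ℝ
  | 0 => 0
  | k + 1 => A.mulVec (ltiState A B u k) + B.mulVec (u k)

/-- Output trajectory `z_k = C h_k + D u_k` of the DT-LTI system. -/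
noncomputable def ltiOutput {n m p : ℕ} (A : Matrix (Fin n) (Fin n) ℝ)
    (B : Matrix (Fin n) (Fin m) ℝ) (C : Matrix (Fin p) (Fin n) ℝ)
    (D : Matrix (Fin p) (Fin m) ℝ) (u : ℕ → Fin m → ℝ) (k : ℕ) : Fin p → ℝ :=
  C.mulVec (ltiState A B u k) + D.mulVec (u k)

lemma sqNorm_eq_dot {d : ℕ} (v : Fin d → ℝ) : sqNorm v = v ⬝ᵥ v := by
  simp [sqNorm, dotProduct, sq]

lemma lti_step_identity {n m p : ℕ}
    (A : Matrix (Fin n) (Fin n) ℝ) (B : Matrix (Fin n) (Fin m) ℝ)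
    (C : Matrix (Fin p) (Fin n) ℝ) (D : Matrix (Fin p) (Fin m) ℝ)
    (γ : ℝ) (P : Matrix (Fin n) (Fin n) ℝ) (h : Fin n → ℝ) (u : Fin m → ℝ) :
    (C *ᵥ h + D *ᵥ u) ⬝ᵥ (C *ᵥ h + D *ᵥ u)
      + (A *ᵥ h + B *ᵥ u) ⬝ᵥ P *ᵥ (A *ᵥ h + B *ᵥ u)
      = h ⬝ᵥ P *ᵥ h + γ ^ 2 * (u ⬝ᵥ u)
        + (Sum.elim h u) ⬝ᵥ (Matrix.fromBlocks
            (Aᵀ * P * A - P + Cᵀ * C) (Aᵀ * P * B + Cᵀ * D)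
            (Bᵀ * P * A + Dᵀ * C) (Bᵀ * P * B + Dᵀ * D - γ ^ 2 • 1)) *ᵥ (Sum.elim h u) := by
  simp [Matrix.fromBlocks_mulVec, sumElim_dotProduct_sumElim,
    Matrix.mulVec_add, Matrix.add_mulVec, Matrix.sub_mulVec, Matrix.smul_mulVec,
    Matrix.one_mulVec, dotProduct_add, add_dotProduct, dotProduct_sub, sub_dotProduct,
    dotProduct_smul, smul_eq_mul, Matrix.dotProduct_mulVec, ← Matrix.vecMul_vecMul,
    Matrix.vecMul_transpose, Matrix.add_vecMul]
  ring

theorem stmt0 {n m p : ℕ} (hn : 1 ≤ n) (hm : 1 ≤ m) (hp : 1 ≤ p)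
    (A : Matrix (Fin n) (Fin n) ℝ) (B : Matrix (Fin n) (Fin m) ℝ)
    (C : Matrix (Fin p) (Fin n) ℝ) (D : Matrix (Fin p) (Fin m) ℝ)
    (γ : ℝ) (hγ : 0 < γ) (P : Matrix (Fin n) (Fin n) ℝ) (hP : P.PosDef)
    (hLMI : (-(Matrix.fromBlocks
        (Aᵀ * P * A - P + Cᵀ * C) (Aᵀ * P * B + Cᵀ * D)
        (Bᵀ * P * A + Dᵀ * C) (Bᵀ * P * B + Dᵀ * D - γ ^ 2 • 1))).PosDef)
    (u : ℕ → Fin m → ℝ) (T : ℕ) :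
    ∑ k ∈ Finset.range T, sqNorm (ltiOutput A B C D u k)
        + ltiState A B u T ⬝ᵥ P.mulVec (ltiState A B u T)
      ≤ γ ^ 2 * ∑ k ∈ Finset.range T, sqNorm (u k) := by
  induction T with
  | zero => simp [ltiState]
  | succ T ih =>
    set M := Matrix.fromBlocks
        (Aᵀ * P * A - P + Cᵀ * C) (Aᵀ * P * B + Cᵀ * D)
        (Bᵀ * P * A + Dᵀ * C) (Bᵀ * P * B + Dᵀ * D - γ ^ 2 • 1) with hM
    set h := ltiState A B u T with hh
    have hneg : (Sum.elim h (u T)) ⬝ᵥ M *ᵥ (Sum.elim h (u T)) ≤ 0 := by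
      have := hLMI.posSemidef.dotProduct_mulVec_nonneg (Sum.elim h (u T))
      simp only [Matrix.neg_mulVec, dotProduct_neg] at this
      -- this : 0 ≤ re ... or similar
      simpa using this
    have hstep := lti_step_identity A B C D γ P h (u T)
    rw [Finset.sum_range_succ, Finset.sum_range_succ]
    have hz : sqNorm (ltiOutput A B C D u T)
        + ltiState A B u (T + 1) ⬝ᵥ P *ᵥ (ltiState A B u (T + 1))
        = h ⬝ᵥ P *ᵥ h + γ ^ 2 * sqNorm (u T)
          + (Sum.elim h (u T)) ⬝ᵥ M *ᵥ (Sum.elim h (u T)) := by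
      rw [sqNorm_eq_dot, sqNorm_eq_dot]
      show (C *ᵥ h + D *ᵥ u T) ⬝ᵥ (C *ᵥ h + D *ᵥ u T)
          + (A *ᵥ h + B *ᵥ u T) ⬝ᵥ P *ᵥ (A *ᵥ h + B *ᵥ u T) = _
      rw [hstep]
    have : ∑ k ∈ Finset.range T, sqNorm (ltiOutput A B C D u k)
        + sqNorm (ltiOutput A B C D u T)
        + ltiState A B u (T + 1) ⬝ᵥ P *ᵥ (ltiState A B u (T + 1))
        ≤ (∑ k ∈ Finset.range T, sqNorm (ltiOutput A B C D u k) + h ⬝ᵥ P *ᵥ h)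
          + γ ^ 2 * sqNorm (u T) := by
      nlinarith [hz, hneg]
    calc _ ≤ (∑ k ∈ Finset.range T, sqNorm (ltiOutput A B C D u k) + h ⬝ᵥ P *ᵥ h)
          + γ ^ 2 * sqNorm (u T) := this
      _ ≤ γ ^ 2 * ∑ k ∈ Finset.range T, sqNorm (u k) + γ ^ 2 * sqNorm (u T) := by
          linarith [ih]
      _ = γ ^ 2 * (∑ k ∈ Finset.range T, sqNorm (u k) + sqNorm (u T)) := by ring
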